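/- A condensed set X is discrete (i.e. lies in the essential image of the constant sheaf functor from Set to CondSet) if and only if it lies in the essential image of the functor L : Set → CondSet sending a set Y to the sheaf S ↦ LocConst(S, Y) of locally constant maps; that is, X is discrete if and only if there exists a set Y and an isomorphism of condensed sets X ≅ LocConst(−, Y). -/
import Mathlib


universe u

open CategoryTheory Limits

/-- A condensed set `X` is discrete (i.e. lies in the essential image of the constant sheaf
functor from `Set` to `CondSet`) if and only if there exists a set `Y` and an isomorphism of
condensed sets `X ≅ LocConst(−, Y)`. -/
theorem condensedSet_isDiscrete_iff_locallyConstant (X : CondensedSet.{u}) :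
    X.IsDiscrete ↔ ∃ (Y : Type (u + 1)),
      Nonempty (X ≅ CondensedSet.LocallyConstant.functor.obj Y) := by
  constructor
  · intro h
    obtain ⟨Y, ⟨i⟩⟩ := h.mem_essImage
    exact ⟨Y, ⟨i.symm ≪≫ (CondensedSet.LocallyConstant.iso.symm.app Y)⟩⟩
  · rintro ⟨Y, ⟨i⟩⟩
    exact Sheaf.isConstant_of_iso (J := coherentTopology CompHaus) (i ≪≫ CondensedSet.LocallyConstant.iso.app Y)
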